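/- arXiv:2006.10179 — 4 statements merged into one kernel-verified Lean document; each statement's English description precedes it below -/
import Mathlib

section
/- Let C ⊆ ℝ^m and K ⊆ ℝ^n be convex sets, f, g : C × K → ℝ, f̃ : C → ℝ^ñ, g̃ : K → ℝ^m̃, and let C̃ ⊆ ℝ^ñ, K̃ ⊆ ℝ^m̃ be closed convex cones with polar cones C̃° and K̃°. A pair of strategies (x̄, μ̄) ∈ C × K̃° and (ȳ, ν̄) ∈ K × C̃° is a Nash equilibrium of the Lagrangian game (min_{x∈C, μ∈K̃°} f(x,y) + νᵀf̃(x) − μᵀg̃(y), min_{y∈K, ν∈C̃°} g(x,y) + μᵀg̃(y) − νᵀf̃(x)) if and only if (x̄, ν̄) is a Nash equilibrium of the zero-sum game min_{x∈C} max_{ν∈C̃°} F(x) + νᵀf̃(x) and (ȳ, μ̄) is a Nash equilibrium of the zero-sum game min_{y∈K} max_{μ∈K̃°} G(y) + μᵀg̃(y), where F(x) := f(x, ȳ) and G(y) := g(x̄, y). -/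
open Finset

/-- The polar of a convex cone `K ⊆ ℝ^d`: `K° = {y : ∀ x ∈ K, xᵀy ≤ 0}`. -/
def polarCone {d : ℕ} (K : Set (Fin d → ℝ)) : Set (Fin d → ℝ) :=
  {y | ∀ x ∈ K, ∑ i, x i * y i ≤ 0}

/-- `((xb, μb), (yb, νb))` is a Nash equilibrium of the Lagrangian game
iff `(xb, νb)` is a saddle point of `min_{x ∈ C} max_{ν ∈ Ct°} F(x) + νᵀ f̃(x)` and
`(yb, μb)` is a saddle point of `min_{y ∈ K} max_{μ ∈ Kt°} G(y) + μᵀ g̃(y)`,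
where `F(x) = f(x, yb)` and `G(y) = g(xb, y)`. -/
theorem stmt_1 {m n nt mt : ℕ}
    (C : Set (Fin m → ℝ)) (K : Set (Fin n → ℝ))
    (hC : Convex ℝ C) (hK : Convex ℝ K)
    (f g : (Fin m → ℝ) → (Fin n → ℝ) → ℝ)
    (ft : (Fin m → ℝ) → (Fin nt → ℝ)) (gt : (Fin n → ℝ) → (Fin mt → ℝ))
    (Ct : Set (Fin nt → ℝ)) (Kt : Set (Fin mt → ℝ))
    (hCt_conv : Convex ℝ Ct) (hCt_closed : IsClosed Ct)
    (hCt_cone : ∀ t : ℝ, 0 ≤ t → ∀ z ∈ Ct, t • z ∈ Ct)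
    (hKt_conv : Convex ℝ Kt) (hKt_closed : IsClosed Kt)
    (hKt_cone : ∀ t : ℝ, 0 ≤ t → ∀ z ∈ Kt, t • z ∈ Kt)
    (F : (Fin m → ℝ) → ℝ) (G : (Fin n → ℝ) → ℝ)
    (xb : Fin m → ℝ) (μb : Fin mt → ℝ) (yb : Fin n → ℝ) (νb : Fin nt → ℝ)
    (hF : F = fun x => f x yb) (hG : G = fun y => g xb y)
    (hxb : xb ∈ C) (hμb : μb ∈ polarCone Kt) (hyb : yb ∈ K) (hνb : νb ∈ polarCone Ct) :
    -- Nash equilibrium of the Lagrangian game: each player's pair of strategies is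
    -- a best response to the other player's pair of strategies
    ((∀ x ∈ C, ∀ μ ∈ polarCone Kt,
        f xb yb + (∑ i, νb i * ft xb i) - (∑ j, μb j * gt yb j)
          ≤ f x yb + (∑ i, νb i * ft x i) - (∑ j, μ j * gt yb j)) ∧
     (∀ y ∈ K, ∀ ν ∈ polarCone Ct,
        g xb yb + (∑ j, μb j * gt yb j) - (∑ i, νb i * ft xb i)
          ≤ g xb y + (∑ j, μb j * gt y j) - (∑ i, ν i * ft xb i)))
      ↔
    -- (xb, νb) is a saddle point of min_{x ∈ C} max_{ν ∈ Ct°} F(x) + νᵀ f̃(x), and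
    -- (yb, μb) is a saddle point of min_{y ∈ K} max_{μ ∈ Kt°} G(y) + μᵀ g̃(y)
    (((∀ x ∈ C, F xb + (∑ i, νb i * ft xb i) ≤ F x + (∑ i, νb i * ft x i)) ∧
      (∀ ν ∈ polarCone Ct, F xb + (∑ i, ν i * ft xb i) ≤ F xb + (∑ i, νb i * ft xb i))) ∧
     ((∀ y ∈ K, G yb + (∑ j, μb j * gt yb j) ≤ G y + (∑ j, μb j * gt y j)) ∧
      (∀ μ ∈ polarCone Kt, G yb + (∑ j, μ j * gt yb j) ≤ G yb + (∑ j, μb j * gt yb j)))) := by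
  subst hF hG
  simp only []
  constructor
  · rintro ⟨h1, h2⟩
    refine ⟨⟨fun x hx => ?_, fun ν hν => ?_⟩, fun y hy => ?_, fun μ hμ => ?_⟩
    · have := h1 x hx μb hμb; linarith
    · have := h2 yb hyb ν hν; linarith
    · have := h2 y hy νb hνb; linarith
    · have := h1 xb hxb μ hμ; linarith
  · rintro ⟨⟨hFmin, hνmax⟩, hGmin, hμmax⟩
    refine ⟨fun x hx μ hμ => ?_, fun y hy ν hν => ?_⟩
    · have := hFmin x hx; have := hμmax μ hμ; linarith
    · have := hGmin y hy; have := hνmax ν hν; linarith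
end

section
/- Let C ⊆ ℝ^m, K ⊆ ℝ^n be convex sets, C̃ ⊆ ℝ^ñ, K̃ ⊆ ℝ^m̃ closed convex cones, and assume: (i) f, g : C × K → ℝ, f̃ : C → ℝ^ñ, g̃ : K → ℝ^m̃ are continuous; (ii) f̃ is convex with respect to the cone −C̃ and g̃ is convex with respect to the cone −K̃; (iii) for every ȳ ∈ K the function F(x) := f(x, ȳ) is convex on C, and for every x̄ ∈ C the function G(y) := g(x̄, y) is convex on K; (iv) for all x̄ ∈ C and ȳ ∈ K the infimum of F over {x ∈ C : f̃(x) ∈ C̃} and the infimum of G over {y ∈ K : g̃(y) ∈ K̃} are finite; (v) there exist x ∈ int C with f̃(x) ∈ int C̃ and y ∈ int K with g̃(y) ∈ int K̃ (Slater's condition). Then (x̄, ȳ) is a Nash equilibrium of the constrained game (min_{x∈C, f̃(x)∈C̃} f(x,y), min_{y∈K, g̃(y)∈K̃} g(x,y)) if and only if there exist ν̄ ∈ C̃° and μ̄ ∈ K̃° such that (x̄, μ̄) and (ȳ, ν̄) form a Nash equilibrium of the Lagrangian game (min_{x∈C, μ∈K̃°} f(x,y) + νᵀf̃(x) − μᵀg̃(y),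 min_{y∈K, ν∈C̃°} g(x,y) + μᵀg̃(y) − νᵀf̃(x)). -/
open Finset

/-- A function `h` is convex with respect to the cone `S` if
`τ h(x) + (1-τ) h(y) - h(τ x + (1-τ) y) ∈ S` for all `τ ∈ [0,1]` and `x, y` in the domain. -/
def ConvexWrtCone {d e : ℕ} (D : Set (Fin d → ℝ)) (h : (Fin d → ℝ) → (Fin e → ℝ))
    (S : Set (Fin e → ℝ)) : Prop :=
  ∀ τ ∈ Set.Icc (0 : ℝ) 1, ∀ x ∈ D, ∀ y ∈ D,
    τ • h x + (1 - τ) • h y - h (τ • x + (1 - τ) • y) ∈ S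


lemma clm_repr {e : ℕ} (g : (Fin e → ℝ) →L[ℝ] ℝ) (z : Fin e → ℝ) :
    g z = ∑ i, z i * g (Pi.single i 1) := by
  conv_lhs => rw [← Finset.univ_sum_single z]
  rw [map_sum]
  refine Finset.sum_congr rfl fun i _ => ?_
  have h : (Pi.single i (z i) : Fin e → ℝ) = z i • (Pi.single i 1 : Fin e → ℝ) := by
    funext j
    simp [Pi.single_apply, mul_ite]
  rw [h, map_smul, smul_eq_mul]

lemma sum_mul_comm' {e : ℕ} (a b : Fin e → ℝ) : ∑ i, a i * b i = ∑ i, b i * a i :=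
  Finset.sum_congr rfl fun i _ => mul_comm _ _

lemma zero_mem_polar {e : ℕ} (S : Set (Fin e → ℝ)) : (0 : Fin e → ℝ) ∈ polarCone S := by
  intro x _; simp

lemma polar_add {e : ℕ} {S : Set (Fin e → ℝ)} {y₁ y₂ : Fin e → ℝ}
    (h₁ : y₁ ∈ polarCone S) (h₂ : y₂ ∈ polarCone S) : y₁ + y₂ ∈ polarCone S := by
  intro x hx
  have := h₁ x hx
  have := h₂ x hx
  simp only [Pi.add_apply, mul_add, Finset.sum_add_distrib]
  linarith

/-- bipolar-type membership via separation -/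
lemma mem_of_forall_polar {e : ℕ} {S : Set (Fin e → ℝ)} (hconv : Convex ℝ S)
    (hclosed : IsClosed S) (hcone : ∀ t : ℝ, 0 ≤ t → ∀ z ∈ S, t • z ∈ S)
    (hne : S.Nonempty) {z : Fin e → ℝ}
    (hz : ∀ y ∈ polarCone S, ∑ i, z i * y i ≤ 0) : z ∈ S := by
  by_contra hzS
  obtain ⟨f, u, hfu, huz⟩ := geometric_hahn_banach_closed_point hconv hclosed hzS
  obtain ⟨s₀, hs₀⟩ := hne
  have h0S : (0 : Fin e → ℝ) ∈ S := by simpa using hcone 0 le_rfl s₀ hs₀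
  have hu : 0 < u := by simpa using hfu 0 h0S
  have hfle : ∀ s ∈ S, f s ≤ 0 := by
    intro s hs
    by_contra hpos
    push_neg at hpos
    have ht : (0:ℝ) ≤ (u + 1) / f s := div_nonneg (by linarith) hpos.le
    have := hfu _ (hcone _ ht s hs)
    rw [map_smul, smul_eq_mul, div_mul_cancel₀ _ hpos.ne'] at this
    linarith
  have hy : (fun i => f (Pi.single i 1)) ∈ polarCone S := by
    intro s hs
    rw [← clm_repr f s]
    exact hfle s hs
  have := hz _ hy
  rw [← clm_repr f z] at this
  linarith

lemma kkt {d e : ℕ} {D : Set (Fin d → ℝ)} (hD : Convex ℝ D)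
    {S : Set (Fin e → ℝ)} (hS : Convex ℝ S)
    (hScone : ∀ t : ℝ, 0 ≤ t → ∀ z ∈ S, t • z ∈ S)
    {F : (Fin d → ℝ) → ℝ} {h : (Fin d → ℝ) → (Fin e → ℝ)}
    (hF : ConvexOn ℝ D F) (hh : ConvexWrtCone D h (-S))
    {xb : Fin d → ℝ} (hxbD : xb ∈ D) (hxbS : h xb ∈ S)
    (hopt : ∀ x ∈ D, h x ∈ S → F xb ≤ F x)
    {x0 : Fin d → ℝ} (hx0D : x0 ∈ D) (hx0S : h x0 ∈ interior S) :
    ∃ ν ∈ polarCone S, (∑ i, ν i * h xb i) = 0 ∧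
      ∀ x ∈ D, F xb ≤ F x + ∑ i, ν i * h x i := by
  -- S is closed under addition
  have hSadd : ∀ u ∈ S, ∀ v ∈ S, u + v ∈ S := by
    intro u hu v hv
    have h1 := hS hu hv (by norm_num : (0:ℝ) ≤ 1/2) (by norm_num : (0:ℝ) ≤ 1/2) (by norm_num)
    have h2 := hScone 2 (by norm_num) _ h1
    have : (2:ℝ) • ((1/2:ℝ) • u + (1/2:ℝ) • v) = u + v := by
      rw [smul_add, smul_smul, smul_smul]; norm_num
    rwa [this] at h2
  have h0S : (0 : Fin e → ℝ) ∈ S := by simpa using hScone 0 le_rfl _ hxbS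
  set A : Set ((Fin e → ℝ) × ℝ) := {p | ∃ x ∈ D, h x - p.1 ∈ S ∧ F x ≤ p.2} with hAdef
  have hAconv : Convex ℝ A := by
    rintro p ⟨x, hxD, hxS, hxr⟩ q ⟨y, hyD, hyS, hyr⟩ a b ha hb hab
    refine ⟨a • x + b • y, hD hxD hyD ha hb hab, ?_, ?_⟩
    · have hb' : b = 1 - a := by linarith
      subst hb'
      have hcc := hh a ⟨ha, by linarith⟩ x hxD y hyD
      rw [Set.mem_neg] at hcc
      have key : h (a • x + (1-a) • y) - (a • p + (1-a) • q).1
          = -(a • h x + (1-a) • h y - h (a • x + (1-a) • y))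
            + (a • (h x - p.1) + (1-a) • (h y - q.1)) := by
        simp only [Prod.smul_fst, Prod.fst_add, smul_sub]
        module
      rw [key]
      exact hSadd _ hcc _ (hSadd _ (hScone a ha _ hxS) _ (hScone _ hb _ hyS))
    · have h1 := hF.2 hxD hyD ha hb hab
      have h2 : a * F x ≤ a * p.2 := mul_le_mul_of_nonneg_left hxr ha
      have h3 : b * F y ≤ b * q.2 := mul_le_mul_of_nonneg_left hyr hb
      simp only [smul_eq_mul] at h1
      simp only [Prod.snd_add, Prod.smul_snd, smul_eq_mul]
      linarith
  -- interior of A is nonempty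
  obtain ⟨b0, hb0⟩ : ∃ p, p ∈ interior A := by
    refine ⟨((0 : Fin e → ℝ), F x0 + 1), ?_⟩
    have hopen : IsOpen (((fun p : (Fin e → ℝ) × ℝ => h x0 - p.1) ⁻¹' interior S)
        ∩ ((fun p : (Fin e → ℝ) × ℝ => p.2) ⁻¹' Set.Ioi (F x0))) :=
      ((isOpen_interior.preimage (continuous_const.sub continuous_fst))).inter
        (isOpen_Ioi.preimage continuous_snd)
    have hsub : (((fun p : (Fin e → ℝ) × ℝ => h x0 - p.1) ⁻¹' interior S)
        ∩ ((fun p : (Fin e → ℝ) × ℝ => p.2) ⁻¹' Set.Ioi (F x0))) ⊆ A := by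
      rintro p ⟨h1, h2⟩
      exact ⟨x0, hx0D, interior_subset h1, le_of_lt h2⟩
    apply interior_maximal hsub hopen
    constructor
    · simpa using hx0S
    · simp
  -- (0, F xb) is not in the interior of A
  have hnot : ((0 : Fin e → ℝ), F xb) ∉ interior A := by
    intro hmem
    rw [mem_interior_iff_mem_nhds, Metric.mem_nhds_iff] at hmem
    obtain ⟨ε, hε, hball⟩ := hmem
    have hin : ((0 : Fin e → ℝ), F xb - ε/2) ∈ A := by
      apply hball
      have hd : dist (F xb - ε/2) (F xb) = ε/2 := by
        rw [Real.dist_eq, show F xb - ε/2 - F xb = -(ε/2) by ring, abs_neg,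
          abs_of_pos (by linarith)]
      rw [Metric.mem_ball, Prod.dist_eq, hd, dist_self]
      exact max_lt hε (by linarith)
    obtain ⟨x, hxD, hxS, hxr⟩ := hin
    have := hopt x hxD (by simpa using hxS)
    simp only at hxr
    linarith
  -- separate
  obtain ⟨φ, hφ⟩ := geometric_hahn_banach_open_point hAconv.interior isOpen_interior hnot
  set c : ℝ := φ ((0 : Fin e → ℝ), F xb) with hc
  have hAle : ∀ p ∈ A, φ p ≤ c := by
    intro p hp
    have key : ∀ τ : ℝ, τ ∈ Set.Ioo (0:ℝ) 1 → φ ((1 - τ) • p + τ • b0) < c := by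
      intro τ hτ
      exact hφ _ (hAconv.combo_closure_interior_mem_interior (subset_closure hp) hb0
        (by linarith [hτ.2]) hτ.1 (by ring))
    have hcont : Continuous fun τ : ℝ => φ ((1 - τ) • p + τ • b0) := by
      apply φ.continuous.comp
      exact (((continuous_const.sub continuous_id).smul continuous_const).add
        (continuous_id.smul continuous_const))
    have htend : Filter.Tendsto (fun τ : ℝ => φ ((1 - τ) • p + τ • b0))
        (nhdsWithin 0 (Set.Ioi 0)) (nhds (φ p)) := by
      have h0 : φ ((1 - (0:ℝ)) • p + (0:ℝ) • b0) = φ p := by norm_num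
      have := hcont.tendsto 0
      rw [h0] at this
      exact this.mono_left nhdsWithin_le_nhds
    refine le_of_tendsto htend ?_
    filter_upwards [Ioo_mem_nhdsGT_of_mem (by norm_num : (0:ℝ) ∈ Set.Ico (0:ℝ) 1)] with τ hτ
    exact (key τ hτ).le
  -- decompose φ
  set lam : ℝ := φ ((0 : Fin e → ℝ), (1:ℝ)) with hlamdef
  set L : (Fin e → ℝ) →L[ℝ] ℝ := φ.comp (ContinuousLinearMap.inl ℝ (Fin e → ℝ) ℝ) with hLdef
  have hφsplit : ∀ (u : Fin e → ℝ) (r : ℝ), φ (u, r) = L u + r * lam := by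
    intro u r
    have hdec : ((u, r) : (Fin e → ℝ) × ℝ) = ((u, 0) : (Fin e → ℝ) × ℝ)
        + r • (((0 : Fin e → ℝ), (1:ℝ)) : (Fin e → ℝ) × ℝ) := by
      rw [Prod.smul_mk]
      simp
    rw [hdec, map_add, map_smul, smul_eq_mul]
    rfl
  have hcval : c = F xb * lam := by
    rw [hc, hφsplit, map_zero, zero_add]
  have hmain : ∀ x ∈ D, ∀ s ∈ S, L (h x) - L s + F x * lam ≤ F xb * lam := by
    intro x hx s hs
    have hpA : ((h x - s, F x) : (Fin e → ℝ) × ℝ) ∈ A :=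
      ⟨x, hx, by simpa using hs, le_rfl⟩
    have := hAle _ hpA
    rw [hφsplit, map_sub, hcval] at this
    linarith
  have hlam : lam ≤ 0 := by
    have hpA : (((0 : Fin e → ℝ), F xb + 1) : (Fin e → ℝ) × ℝ) ∈ A :=
      ⟨xb, hxbD, by simpa using hxbS, by norm_num⟩
    have := hAle _ hpA
    rw [hφsplit, map_zero, hcval] at this
    linarith
  have hLpos : ∀ s ∈ S, 0 ≤ L s := by
    intro s hs
    by_contra hneg
    push_neg at hneg
    set M : ℝ := F xb * lam - L (h x0) - F x0 * lam with hM
    set t : ℝ := (|M| + 1) / (-L s) with ht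
    have ht0 : 0 ≤ t := div_nonneg (by positivity) (by linarith)
    have h1 := hmain x0 hx0D (t • s) (hScone t ht0 s hs)
    rw [map_smul, smul_eq_mul] at h1
    have h2 : t * (-L s) = |M| + 1 := div_mul_cancel₀ _ (by linarith)
    have h3 : M ≤ |M| := le_abs_self M
    nlinarith
  rcases lt_or_eq_of_le hlam with hlt | heq
  · -- lam < 0 : build the multiplier
    have hLsum : ∀ z : Fin e → ℝ, ∑ i, z i * (L (Pi.single i 1) / lam) = L z / lam := by
      intro z
      rw [clm_repr L z, Finset.sum_div]
      exact Finset.sum_congr rfl fun i _ => (mul_div_assoc _ _ _).symm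
    have hLxb : L (h xb) = 0 := by
      have h1 := hmain xb hxbD 0 h0S
      rw [map_zero] at h1
      have h2 := hLpos _ hxbS
      linarith
    have hνsum : ∀ z : Fin e → ℝ, ∑ i, (L (Pi.single i 1) / lam) * z i = L z / lam := by
      intro z
      rw [← hLsum z]
      exact Finset.sum_congr rfl fun i _ => mul_comm _ _
    refine ⟨fun i => L (Pi.single i 1) / lam, ?_, ?_, ?_⟩
    · intro s hs
      rw [hLsum s]
      exact div_nonpos_iff.mpr (Or.inl ⟨hLpos s hs, hlt.le⟩)
    · rw [hνsum, hLxb, zero_div]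
    · intro x hx
      have h1 := hmain x hx 0 h0S
      rw [map_zero] at h1
      rw [hνsum]
      by_contra hcon
      push_neg at hcon
      have h2 : F xb * lam < (F x + L (h x) / lam) * lam :=
        mul_lt_mul_of_neg_right hcon hlt
      rw [add_mul, div_mul_cancel₀ _ hlt.ne] at h2
      linarith
  · -- lam = 0 : contradiction with Slater
    exfalso
    have heq' : lam = 0 := heq
    have hLx0 : L (h x0) = 0 := by
      have h1 := hmain x0 hx0D 0 h0S
      rw [map_zero, heq'] at h1
      have h2 := hLpos _ (interior_subset hx0S)
      linarith
    have hL0 : ∀ v : Fin e → ℝ, L v = 0 := by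
      have hint := hx0S
      rw [mem_interior_iff_mem_nhds, Metric.mem_nhds_iff] at hint
      obtain ⟨ε, hε, hball⟩ := hint
      have hmem : ∀ u : Fin e → ℝ, ‖u‖ < ε → h x0 + u ∈ S := by
        intro u hu
        apply hball
        rw [Metric.mem_ball, dist_eq_norm]
        simpa using hu
      intro v
      set δ : ℝ := ε / (2 * (‖v‖ + 1)) with hδdef
      have hδ : 0 < δ := by positivity
      have hnv : ‖δ • v‖ < ε := by
        rw [norm_smul, Real.norm_eq_abs, abs_of_pos hδ]
        have h1 : δ * ‖v‖ < δ * (‖v‖ + 1) := by nlinarith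
        have h2 : δ * (‖v‖ + 1) = ε / 2 := by
          rw [hδdef]; field_simp
        linarith
      have hnv' : ‖δ • (-v)‖ < ε := by rwa [smul_neg, norm_neg]
      have h1 := hLpos _ (hmem _ hnv)
      have h2 := hLpos _ (hmem _ hnv')
      have e1 : L (h x0 + δ • v) = δ * L v := by
        rw [map_add, map_smul, hLx0, smul_eq_mul, zero_add]
      have e2 : L (h x0 + δ • (-v)) = -(δ * L v) := by
        rw [map_add, map_smul, map_neg, hLx0, smul_eq_mul, zero_add]
        ring
      rw [e1] at h1
      rw [e2] at h2
      have h4 : δ * L v = 0 := le_antisymm (by linarith) h1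
      rcases mul_eq_zero.mp h4 with h5 | h5
      · exact absurd h5 hδ.ne'
      · exact h5
    have hb0lt := hφ b0 hb0
    have hb0eq : φ b0 = 0 := by
      have h3 : φ b0 = L b0.1 + b0.2 * lam := hφsplit b0.1 b0.2
      rw [h3, hL0, heq', mul_zero, add_zero]
    rw [hb0eq, hcval, heq', mul_zero] at hb0lt
    exact lt_irrefl 0 hb0lt

/-- under continuity, cone-convexity, convexity, finiteness and Slater's
condition, `(xb, yb)` is a Nash equilibrium of the constrained game iff there are
Lagrange multipliers `νb ∈ Ct°`, `μb ∈ Kt°` such that `((xb, μb), (yb, νb))` is a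
Nash equilibrium of the Lagrangian game. -/
theorem stmt_2 {m n nt mt : ℕ}
    (C : Set (Fin m → ℝ)) (K : Set (Fin n → ℝ))
    (hC : Convex ℝ C) (hK : Convex ℝ K)
    (Ct : Set (Fin nt → ℝ)) (Kt : Set (Fin mt → ℝ))
    (hCt_conv : Convex ℝ Ct) (hCt_closed : IsClosed Ct)
    (hCt_cone : ∀ t : ℝ, 0 ≤ t → ∀ z ∈ Ct, t • z ∈ Ct)
    (hKt_conv : Convex ℝ Kt) (hKt_closed : IsClosed Kt)
    (hKt_cone : ∀ t : ℝ, 0 ≤ t → ∀ z ∈ Kt, t • z ∈ Kt)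
    (f g : (Fin m → ℝ) → (Fin n → ℝ) → ℝ)
    (ft : (Fin m → ℝ) → (Fin nt → ℝ)) (gt : (Fin n → ℝ) → (Fin mt → ℝ))
    -- (i) continuity
    (hf_cont : ContinuousOn (fun p : (Fin m → ℝ) × (Fin n → ℝ) => f p.1 p.2) (C ×ˢ K))
    (hg_cont : ContinuousOn (fun p : (Fin m → ℝ) × (Fin n → ℝ) => g p.1 p.2) (C ×ˢ K))
    (hft_cont : ContinuousOn ft C) (hgt_cont : ContinuousOn gt K)
    -- (ii) cone-convexity of the constraint maps
    (hft_conv : ConvexWrtCone C ft (-Ct)) (hgt_conv : ConvexWrtCone K gt (-Kt))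
    -- (iii) convexity of the decoupled objectives
    (hf_conv : ∀ y ∈ K, ConvexOn ℝ C (fun x => f x y))
    (hg_conv : ∀ x ∈ C, ConvexOn ℝ K (fun y => g x y))
    -- (iv) finiteness of the minimal values of the decoupled constrained problems
    (hf_bdd : ∀ y ∈ K, BddBelow ((fun x => f x y) '' {x | x ∈ C ∧ ft x ∈ Ct}))
    (hg_bdd : ∀ x ∈ C, BddBelow ((fun y => g x y) '' {y | y ∈ K ∧ gt y ∈ Kt}))
    -- (v) Slater's condition
    (hslater : ∃ x y, x ∈ interior C ∧ ft x ∈ interior Ct ∧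
      y ∈ interior K ∧ gt y ∈ interior Kt)
    (xb : Fin m → ℝ) (yb : Fin n → ℝ) :
    -- (xb, yb) is a Nash equilibrium of the constrained game ...
    (xb ∈ C ∧ ft xb ∈ Ct ∧ yb ∈ K ∧ gt yb ∈ Kt ∧
     (∀ x ∈ C, ft x ∈ Ct → f xb yb ≤ f x yb) ∧
     (∀ y ∈ K, gt y ∈ Kt → g xb yb ≤ g xb y))
      ↔
    -- ... iff there exist multipliers making it a Nash equilibrium of the Lagrangian game
    (∃ νb ∈ polarCone Ct, ∃ μb ∈ polarCone Kt,
      xb ∈ C ∧ yb ∈ K ∧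
      (∀ x ∈ C, ∀ μ ∈ polarCone Kt,
        f xb yb + (∑ i, νb i * ft xb i) - (∑ j, μb j * gt yb j)
          ≤ f x yb + (∑ i, νb i * ft x i) - (∑ j, μ j * gt yb j)) ∧
      (∀ y ∈ K, ∀ ν ∈ polarCone Ct,
        g xb yb + (∑ j, μb j * gt yb j) - (∑ i, νb i * ft xb i)
          ≤ g xb y + (∑ j, μb j * gt y j) - (∑ i, ν i * ft xb i))) := by
  have hCtne : Ct.Nonempty := by
    obtain ⟨x, y, _, hx2, _, _⟩ := hslater
    exact ⟨ft x, interior_subset hx2⟩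
  have hKtne : Kt.Nonempty := by
    obtain ⟨x, y, _, _, _, hy2⟩ := hslater
    exact ⟨gt y, interior_subset hy2⟩
  constructor
  · rintro ⟨hxbC, hxbft, hybK, hybgt, hxopt, hyopt⟩
    obtain ⟨x0, y0, hx0, hx0ft, hy0, hy0gt⟩ := hslater
    obtain ⟨νb, hνb, hνb0, hνbineq⟩ :=
      kkt hC hCt_conv hCt_cone (hf_conv yb hybK) hft_conv hxbC hxbft hxopt
        (interior_subset hx0) hx0ft
    obtain ⟨μb, hμb, hμb0, hμbineq⟩ :=
      kkt hK hKt_conv hKt_cone (hg_conv xb hxbC) hgt_conv hybK hybgt hyopt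
        (interior_subset hy0) hy0gt
    refine ⟨νb, hνb, μb, hμb, hxbC, hybK, ?_, ?_⟩
    · intro x hx μ hμ
      have h1 := hνbineq x hx
      have h2 : ∑ j, μ j * gt yb j ≤ 0 := by
        rw [sum_mul_comm']
        exact hμ _ hybgt
      rw [hνb0, hμb0]
      linarith
    · intro y hy ν hν
      have h1 := hμbineq y hy
      have h2 : ∑ i, ν i * ft xb i ≤ 0 := by
        rw [sum_mul_comm']
        exact hν _ hxbft
      rw [hνb0, hμb0]
      linarith
  · rintro ⟨νb, hνb, μb, hμb, hxbC, hybK, hx, hy⟩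
    have hybgt : gt yb ∈ Kt := by
      apply mem_of_forall_polar hKt_conv hKt_closed hKt_cone hKtne
      intro μ' hμ'
      have h1 := hx xb hxbC (μb + μ') (polar_add hμb hμ')
      have h2 : ∑ j, (μb + μ') j * gt yb j
          = ∑ j, μb j * gt yb j + ∑ j, μ' j * gt yb j := by
        simp [Pi.add_apply, add_mul, Finset.sum_add_distrib]
      rw [h2] at h1
      rw [sum_mul_comm']
      linarith
    have hxbft : ft xb ∈ Ct := by
      apply mem_of_forall_polar hCt_conv hCt_closed hCt_cone hCtne
      intro ν' hν'
      have h1 := hy yb hybK (νb + ν') (polar_add hνb hν')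
      have h2 : ∑ i, (νb + ν') i * ft xb i
          = ∑ i, νb i * ft xb i + ∑ i, ν' i * ft xb i := by
        simp [Pi.add_apply, add_mul, Finset.sum_add_distrib]
      rw [h2] at h1
      rw [sum_mul_comm']
      linarith
    have hμb0 : ∑ j, μb j * gt yb j = 0 := by
      have hle : ∑ j, μb j * gt yb j ≤ 0 := by
        rw [sum_mul_comm']
        exact hμb _ hybgt
      have h0 := hx xb hxbC 0 (zero_mem_polar Kt)
      have hz : ∑ j, (0 : Fin mt → ℝ) j * gt yb j = 0 := by simp
      rw [hz] at h0
      linarith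
    have hνb0 : ∑ i, νb i * ft xb i = 0 := by
      have hle : ∑ i, νb i * ft xb i ≤ 0 := by
        rw [sum_mul_comm']
        exact hνb _ hxbft
      have h0 := hy yb hybK 0 (zero_mem_polar Ct)
      have hz : ∑ i, (0 : Fin nt → ℝ) i * ft xb i = 0 := by simp
      rw [hz] at h0
      linarith
    refine ⟨hxbC, hxbft, hybK, hybgt, ?_, ?_⟩
    · intro x hxC hxft
      have h1 := hx x hxC μb hμb
      have h2 : ∑ i, νb i * ft x i ≤ 0 := by
        rw [sum_mul_comm']
        exact hνb _ hxft
      rw [hνb0] at h1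
      linarith
    · intro y hyK hygt
      have h1 := hy y hyK νb hνb
      have h2 : ∑ j, μb j * gt y j ≤ 0 := by
        rw [sum_mul_comm']
        exact hμb _ hygt
      rw [hμb0] at h1
      linarith
end

section
/- Consider f(x, y) = 2xy − (1 − y)², g(x, y) = −f(x, y), and step size η = 1/4. Define the projected competitive gradient descent (PCGD) update at a point (x, y) by Δx = −η(1 − η² f_{xy} g_{yx})^{-1}(f_x − η f_{xy} g_y), Δy = −η(1 − η² g_{yx} f_{xy})^{-1}(g_y − η g_{yx} f_x), followed by projection onto the nonnegative orthant: (x', y') = (max(0, x + Δx), max(0, y + Δy)), where f_x = ∂f/∂x, g_y = ∂g/∂y, f_{xy} = ∂²f/∂x∂y, g_{yx} = ∂²g/∂y∂x are evaluated at (x, y). Then (x, y) = (0, 2/3) is a fixed point of this update, although (0, 2/3) is not a Nash equilibrium of the game constrained to x ≥ 0, y ≥ 0. -/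
/-- `f(x,y) = 2xy - (1-y)²`, the objective of the minimizing x-player. -/
def fGame (x y : ℝ) : ℝ := 2 * x * y - (1 - y) ^ 2

/-- `g = -f`, the objective of the minimizing y-player. -/
def gGame (x y : ℝ) : ℝ := -fGame x y

/-- `f_x = ∂f/∂x` evaluated at `(x, y)`. -/
noncomputable def fX (x y : ℝ) : ℝ := deriv (fun x' => fGame x' y) x

/-- `g_y = ∂g/∂y` evaluated at `(x, y)`. -/
noncomputable def gY (x y : ℝ) : ℝ := deriv (fun y' => gGame x y') y

/-- `f_{xy} = ∂²f/∂x∂y` evaluated at `(x, y)`. -/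
noncomputable def fXY (x y : ℝ) : ℝ := deriv (fun y' => deriv (fun x' => fGame x' y') x) y

/-- `g_{yx} = ∂²g/∂y∂x` evaluated at `(x, y)`. -/
noncomputable def gYX (x y : ℝ) : ℝ := deriv (fun x' => deriv (fun y' => gGame x' y') y) x


lemma hfX (x y : ℝ) : HasDerivAt (fun x' => fGame x' y) (2 * y) x := by
  unfold fGame
  have h : HasDerivAt (fun x' : ℝ => 2 * x' * y - (1-y)^2) (2 * 1 * y) x :=
    (((hasDerivAt_id x).const_mul 2).mul_const y).sub_const _
  simpa using h

lemma fX_eq (x y : ℝ) : fX x y = 2 * y := (hfX x y).deriv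

lemma hgY (x y : ℝ) : HasDerivAt (fun y' => gGame x y') (-2*x - 2*(1-y)) y := by
  unfold gGame fGame
  have h1 : HasDerivAt (fun y' : ℝ => 2 * x * y') (2 * x * 1) y :=
    (hasDerivAt_id y).const_mul (2*x)
  have h2 : HasDerivAt (fun y' : ℝ => (1 - y')^2) ((2:ℕ) * (1-y)^1 * (0 - 1)) y :=
    (((hasDerivAt_const y (1:ℝ)).sub (hasDerivAt_id y)).pow 2)
  have h : HasDerivAt (fun y' : ℝ => -(2 * x * y' - (1 - y')^2)) _ y := (h1.sub h2).neg
  convert h using 1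
  ring

lemma gY_eq (x y : ℝ) : gY x y = -2*x - 2*(1-y) := (hgY x y).deriv

lemma fXY_eq (x y : ℝ) : fXY x y = 2 := by
  unfold fXY
  have : (fun y' => deriv (fun x' => fGame x' y') x) = fun y' : ℝ => 2 * y' :=
    funext fun y' => (hfX x y').deriv
  rw [this]
  simpa using ((hasDerivAt_id y).const_mul (2:ℝ)).deriv

lemma gYX_eq (x y : ℝ) : gYX x y = -2 := by
  unfold gYX
  have : (fun x' => deriv (fun y' => gGame x' y') y) = fun x' : ℝ => -2*x' - 2*(1-y) :=
    funext fun x' => (hgY x' y).deriv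
  rw [this]
  have h : HasDerivAt (fun x' : ℝ => -2*x' - 2*(1-y)) (-2*1) x :=
    ((hasDerivAt_id x).const_mul (-2)).sub_const _
  simpa using h.deriv

/-- The PCGD update with step size `η = 1/4`:
`Δx = -η (1 - η² f_{xy} g_{yx})⁻¹ (f_x - η f_{xy} g_y)`,
`Δy = -η (1 - η² g_{yx} f_{xy})⁻¹ (g_y - η g_{yx} f_x)`,
followed by projection onto the nonnegative orthant. -/
noncomputable def pcgdStep (p : ℝ × ℝ) : ℝ × ℝ :=
  let x := p.1
  let y := p.2
  let η : ℝ := 1 / 4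
  let Δx := -η * (1 - η ^ 2 * fXY x y * gYX x y)⁻¹ * (fX x y - η * fXY x y * gY x y)
  let Δy := -η * (1 - η ^ 2 * gYX x y * fXY x y)⁻¹ * (gY x y - η * gYX x y * fX x y)
  (max 0 (x + Δx), max 0 (y + Δy))

/-- `(0, 2/3)` is a fixed point of the PCGD update with `η = 1/4`,
although `(0, 2/3)` is not a Nash equilibrium of the game constrained to
`x ≥ 0, y ≥ 0`. -/
theorem stmt_17 :
    pcgdStep (0, 2 / 3) = (0, 2 / 3) ∧
    ¬((∀ x : ℝ, 0 ≤ x → fGame 0 (2 / 3) ≤ fGame x (2 / 3)) ∧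
      (∀ y : ℝ, 0 ≤ y → gGame 0 (2 / 3) ≤ gGame 0 y)) := by
  constructor
  · unfold pcgdStep
    simp only [fX_eq, gY_eq, fXY_eq, gYX_eq]
    norm_num
  · rintro ⟨-, h2⟩
    have := h2 1 (by norm_num)
    simp [gGame, fGame] at this
    norm_num at this
end

section
/- Let A ∈ ℝ^{m×m} and B ∈ ℝ^{n×n} be symmetric positive definite, M ∈ ℝ^{m×n}, N ∈ ℝ^{m×n}, a ∈ ℝ^m, b ∈ ℝ^n, and suppose A − M B^{-1} Nᵀ and B − Nᵀ A^{-1} M are invertible. Then the regularized bilinear game in which the first player solves min_{x∈ℝ^m} aᵀx + xᵀMy + ½ xᵀAx and the second player solves min_{y∈ℝ^n} bᵀy + xᵀNy + ½ yᵀBy has a unique Nash equilibrium, given by x = −(A − M B^{-1} Nᵀ)^{-1}(a − M B^{-1} b) and y = −(B − Nᵀ A^{-1} M)^{-1}(b − Nᵀ A^{-1} a). -/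
open Matrix

/-- Expansion of the quadratic objective around a point. -/
lemma stmt19_quad_expand {m : ℕ} (A : Matrix (Fin m) (Fin m) ℝ) (hsym : Aᵀ = A)
    (c xb d : Fin m → ℝ) :
    c ⬝ᵥ (xb + d) + (1 / 2) * ((xb + d) ⬝ᵥ (A *ᵥ (xb + d)))
      = (c ⬝ᵥ xb + (1 / 2) * (xb ⬝ᵥ (A *ᵥ xb)))
        + (A *ᵥ xb + c) ⬝ᵥ d
        + (1 / 2) * (d ⬝ᵥ (A *ᵥ d)) := by
  have key : xb ⬝ᵥ (A *ᵥ d) = d ⬝ᵥ (A *ᵥ xb) := by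
    rw [dotProduct_mulVec]
    nth_rewrite 1 [← hsym]
    rw [vecMul_transpose, dotProduct_comm]
  simp only [mulVec_add, dotProduct_add, add_dotProduct]
  rw [key, dotProduct_comm d (A *ᵥ xb)]
  ring

/-- A point minimizes a positive-definite quadratic iff the gradient vanishes. -/
lemma stmt19_quad_min {m : ℕ} (A : Matrix (Fin m) (Fin m) ℝ) (hA : A.PosDef)
    (c xb : Fin m → ℝ) :
    (∀ x : Fin m → ℝ,
        c ⬝ᵥ xb + (1 / 2) * (xb ⬝ᵥ (A *ᵥ xb)) ≤ c ⬝ᵥ x + (1 / 2) * (x ⬝ᵥ (A *ᵥ x)))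
      ↔ A *ᵥ xb = -c := by
  have hsym : Aᵀ = A := hA.1
  constructor
  · intro h
    by_contra hne
    set g : Fin m → ℝ := A *ᵥ xb + c with hg
    have hgne : g ≠ 0 := fun h0 => hne (by
      have : A *ᵥ xb = g - c := by rw [hg]; abel
      rw [this, h0]; abel)
    have hgA : 0 < g ⬝ᵥ (A *ᵥ g) := by simpa using hA.dotProduct_mulVec_pos hgne
    have hgg : 0 < g ⬝ᵥ g := by
      simpa using dotProduct_self_star_pos_iff.mpr hgne
    set t : ℝ := (g ⬝ᵥ g) / (g ⬝ᵥ (A *ᵥ g)) with ht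
    have ht0 : 0 < t := div_pos hgg hgA
    have htval : t * (g ⬝ᵥ (A *ᵥ g)) = g ⬝ᵥ g := by
      rw [ht]; field_simp
    have hkey := h (xb + (-(t • g)))
    rw [stmt19_quad_expand A hsym c xb (-(t • g))] at hkey
    simp only [dotProduct_neg, neg_dotProduct, mulVec_neg, mulVec_smul,
      dotProduct_smul, smul_dotProduct, smul_eq_mul, neg_neg] at hkey
    nlinarith [htval, mul_pos ht0 hgg]
  · intro h x
    have hx : xb + (x - xb) = x := by abel
    have := stmt19_quad_expand A hsym c xb (x - xb)
    rw [hx, h] at this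
    rw [this, h]
    have hpsd : 0 ≤ (x - xb) ⬝ᵥ (A *ᵥ (x - xb)) := by
      simpa using hA.posSemidef.dotProduct_mulVec_nonneg (x - xb)
    simp only [neg_add_cancel, zero_dotProduct]
    linarith

/-- From the two stationarity equations, solve for `x`. -/
lemma stmt19_solve_x {m n : ℕ} (A : Matrix (Fin m) (Fin m) ℝ) (B : Matrix (Fin n) (Fin n) ℝ)
    (M : Matrix (Fin m) (Fin n) ℝ) (P : Matrix (Fin n) (Fin m) ℝ)
    (hBd : IsUnit B.det)
    (hS : IsUnit (A - M * B⁻¹ * P).det)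
    (a : Fin m → ℝ) (b : Fin n → ℝ) (x : Fin m → ℝ) (y : Fin n → ℝ)
    (e1 : A *ᵥ x + M *ᵥ y = -a) (e2 : P *ᵥ x + B *ᵥ y = -b) :
    x = -((A - M * B⁻¹ * P)⁻¹ *ᵥ (a - M *ᵥ (B⁻¹ *ᵥ b))) := by
  have hPx : P *ᵥ x = -b - B *ᵥ y := by rw [← e2]; abel
  have hSx : (A - M * B⁻¹ * P) *ᵥ x = -(a - M *ᵥ (B⁻¹ *ᵥ b)) := by
    have h3 : (M * B⁻¹ * P) *ᵥ x = M *ᵥ (B⁻¹ *ᵥ (P *ᵥ x)) := by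
      simp only [mulVec_mulVec, Matrix.mul_assoc]
    have h4 : B⁻¹ *ᵥ (P *ᵥ x) = -(B⁻¹ *ᵥ b) - y := by
      rw [hPx, mulVec_sub, mulVec_neg, mulVec_mulVec, nonsing_inv_mul B hBd, one_mulVec]
    rw [sub_mulVec, h3, h4]
    rw [mulVec_sub, mulVec_neg]
    have hAx : A *ᵥ x = -a - M *ᵥ y := by rw [← e1]; abel
    rw [hAx]
    abel
  have : (A - M * B⁻¹ * P)⁻¹ *ᵥ ((A - M * B⁻¹ * P) *ᵥ x) = x := by
    rw [mulVec_mulVec, nonsing_inv_mul _ hS, one_mulVec]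
  rw [← this, hSx, mulVec_neg]

/-- The closed-form solution satisfies the first stationarity equation. -/
lemma stmt19_eq_a {m n : ℕ} (A : Matrix (Fin m) (Fin m) ℝ) (B : Matrix (Fin n) (Fin n) ℝ)
    (M : Matrix (Fin m) (Fin n) ℝ) (P : Matrix (Fin n) (Fin m) ℝ)
    (hAd : IsUnit A.det) (hBd : IsUnit B.det)
    (hS : IsUnit (A - M * B⁻¹ * P).det) (hT : IsUnit (B - P * A⁻¹ * M).det)
    (a : Fin m → ℝ) (b : Fin n → ℝ) :
    A *ᵥ (-((A - M * B⁻¹ * P)⁻¹ *ᵥ (a - M *ᵥ (B⁻¹ *ᵥ b))))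
      + M *ᵥ (-((B - P * A⁻¹ * M)⁻¹ *ᵥ (b - P *ᵥ (A⁻¹ *ᵥ a)))) = -a := by
  set S := A - M * B⁻¹ * P with hSdef
  set T := B - P * A⁻¹ * M with hTdef
  have id0 : S * (A⁻¹ * M) = M * B⁻¹ * T := by
    rw [hSdef, hTdef]
    simp only [Matrix.sub_mul, Matrix.mul_sub, Matrix.mul_assoc,
      Matrix.mul_nonsing_inv_cancel_left (h := hAd),
      Matrix.nonsing_inv_mul_cancel_left (h := hBd),
      nonsing_inv_mul B hBd, Matrix.mul_one]
  have id1 : M * T⁻¹ = A * (S⁻¹ * (M * B⁻¹)) := by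
    calc M * T⁻¹ = (A * (S⁻¹ * (S * (A⁻¹ * M)))) * T⁻¹ := by
          rw [Matrix.nonsing_inv_mul_cancel_left (h := hS),
              Matrix.mul_nonsing_inv_cancel_left (h := hAd)]
      _ = A * (S⁻¹ * ((M * B⁻¹ * T) * T⁻¹)) := by rw [id0]; simp only [Matrix.mul_assoc]
      _ = A * (S⁻¹ * (M * B⁻¹)) := by
          rw [Matrix.mul_nonsing_inv_cancel_right _ _ hT]
  have id2 : A * S⁻¹ - M * T⁻¹ * (P * A⁻¹) = 1 := by
    rw [id1]
    have h5 : A * (S⁻¹ * (S * A⁻¹)) = A * S⁻¹ - A * (S⁻¹ * (M * B⁻¹)) * (P * A⁻¹) := by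
      nth_rewrite 2 [hSdef]
      simp only [Matrix.sub_mul, Matrix.mul_sub, Matrix.mul_assoc,
        mul_nonsing_inv A hAd, Matrix.mul_one]
    rw [← h5, Matrix.nonsing_inv_mul_cancel_left (h := hS), mul_nonsing_inv A hAd]
  have lhs_eq :
      A *ᵥ (-(S⁻¹ *ᵥ (a - M *ᵥ (B⁻¹ *ᵥ b)))) + M *ᵥ (-(T⁻¹ *ᵥ (b - P *ᵥ (A⁻¹ *ᵥ a))))
        = -(((A * S⁻¹ - M * T⁻¹ * (P * A⁻¹)) *ᵥ a)
            + ((M * T⁻¹ - A * (S⁻¹ * (M * B⁻¹))) *ᵥ b)) := by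
    simp only [mulVec_neg, mulVec_sub, mulVec_mulVec, sub_mulVec, Matrix.mul_assoc]
    abel
  rw [lhs_eq, id2, id1]
  simp

/-- the regularized bilinear game in which the first player solves
`min_x aᵀx + xᵀMy + ½ xᵀAx` and the second player solves `min_y bᵀy + xᵀNy + ½ yᵀBy`,
with `A`, `B` symmetric positive definite and `A - M B⁻¹ Nᵀ`, `B - Nᵀ A⁻¹ M`
invertible, has the unique Nash equilibrium
`x = -(A - M B⁻¹ Nᵀ)⁻¹ (a - M B⁻¹ b)`, `y = -(B - Nᵀ A⁻¹ M)⁻¹ (b - Nᵀ A⁻¹ a)`. -/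
theorem stmt_19 {m n : ℕ}
    (A : Matrix (Fin m) (Fin m) ℝ) (B : Matrix (Fin n) (Fin n) ℝ)
    (hA : A.PosDef) (hB : B.PosDef)
    (M N : Matrix (Fin m) (Fin n) ℝ) (a : Fin m → ℝ) (b : Fin n → ℝ)
    (h1 : IsUnit (A - M * B⁻¹ * Nᵀ).det) (h2 : IsUnit (B - Nᵀ * A⁻¹ * M).det) :
    ∀ xb : Fin m → ℝ, ∀ yb : Fin n → ℝ,
      -- (xb, yb) is a Nash equilibrium of the regularized bilinear game ...
      ((∀ x : Fin m → ℝ,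
          a ⬝ᵥ xb + xb ⬝ᵥ (M *ᵥ yb) + (1 / 2) * (xb ⬝ᵥ (A *ᵥ xb))
            ≤ a ⬝ᵥ x + x ⬝ᵥ (M *ᵥ yb) + (1 / 2) * (x ⬝ᵥ (A *ᵥ x))) ∧
       (∀ y : Fin n → ℝ,
          b ⬝ᵥ yb + xb ⬝ᵥ (N *ᵥ yb) + (1 / 2) * (yb ⬝ᵥ (B *ᵥ yb))
            ≤ b ⬝ᵥ y + xb ⬝ᵥ (N *ᵥ y) + (1 / 2) * (y ⬝ᵥ (B *ᵥ y))))
        ↔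
      -- ... iff it is given by the closed-form solution
      (xb = -((A - M * B⁻¹ * Nᵀ)⁻¹ *ᵥ (a - M *ᵥ (B⁻¹ *ᵥ b))) ∧
       yb = -((B - Nᵀ * A⁻¹ * M)⁻¹ *ᵥ (b - Nᵀ *ᵥ (A⁻¹ *ᵥ a)))) := by
  have hAd : IsUnit A.det := hA.det_pos.ne'.isUnit
  have hBd : IsUnit B.det := hB.det_pos.ne'.isUnit
  intro xb yb
  -- each player's objective in "canonical quadratic" form
  have conv1 : ∀ u x : Fin m → ℝ,
      (a + M *ᵥ yb) ⬝ᵥ x + (1 / 2) * (x ⬝ᵥ (A *ᵥ x))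
        = a ⬝ᵥ x + x ⬝ᵥ (M *ᵥ yb) + (1 / 2) * (x ⬝ᵥ (A *ᵥ x)) := by
    intro u x
    rw [add_dotProduct, dotProduct_comm (M *ᵥ yb) x]
  have conv2 : ∀ y : Fin n → ℝ,
      (b + Nᵀ *ᵥ xb) ⬝ᵥ y + (1 / 2) * (y ⬝ᵥ (B *ᵥ y))
        = b ⬝ᵥ y + xb ⬝ᵥ (N *ᵥ y) + (1 / 2) * (y ⬝ᵥ (B *ᵥ y)) := by
    intro y
    rw [add_dotProduct, mulVec_transpose, ← dotProduct_mulVec]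
  have nash_iff :
      ((∀ x : Fin m → ℝ,
          a ⬝ᵥ xb + xb ⬝ᵥ (M *ᵥ yb) + (1 / 2) * (xb ⬝ᵥ (A *ᵥ xb))
            ≤ a ⬝ᵥ x + x ⬝ᵥ (M *ᵥ yb) + (1 / 2) * (x ⬝ᵥ (A *ᵥ x))) ∧
       (∀ y : Fin n → ℝ,
          b ⬝ᵥ yb + xb ⬝ᵥ (N *ᵥ yb) + (1 / 2) * (yb ⬝ᵥ (B *ᵥ yb))
            ≤ b ⬝ᵥ y + xb ⬝ᵥ (N *ᵥ y) + (1 / 2) * (y ⬝ᵥ (B *ᵥ y))))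
        ↔ (A *ᵥ xb + M *ᵥ yb = -a ∧ Nᵀ *ᵥ xb + B *ᵥ yb = -b) := by
    constructor
    · rintro ⟨hx, hy⟩
      have hx' : A *ᵥ xb = -(a + M *ᵥ yb) := by
        rw [← stmt19_quad_min A hA (a + M *ᵥ yb) xb]
        intro x
        rw [conv1 x x, conv1 x xb]
        exact hx x
      have hy' : B *ᵥ yb = -(b + Nᵀ *ᵥ xb) := by
        rw [← stmt19_quad_min B hB (b + Nᵀ *ᵥ xb) yb]
        intro y
        rw [conv2 y, conv2 yb]
        exact hy y
      constructor
      · rw [hx']; abel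
      · rw [hy']; abel
    · rintro ⟨e1, e2⟩
      have hx' : A *ᵥ xb = -(a + M *ᵥ yb) := by
        rw [neg_add, ← sub_eq_add_neg, eq_sub_iff_add_eq]; exact e1
      have hy' : B *ᵥ yb = -(b + Nᵀ *ᵥ xb) := by
        rw [neg_add, ← sub_eq_add_neg, eq_sub_iff_add_eq]; rw [← e2]; abel
      constructor
      · intro x
        rw [← conv1 x x, ← conv1 x xb]
        exact (stmt19_quad_min A hA (a + M *ᵥ yb) xb).mpr hx' x
      · intro y
        rw [← conv2 y, ← conv2 yb]
        exact (stmt19_quad_min B hB (b + Nᵀ *ᵥ xb) yb).mpr hy' y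
  rw [nash_iff]
  constructor
  · rintro ⟨e1, e2⟩
    refine ⟨stmt19_solve_x A B M Nᵀ hBd h1 a b xb yb e1 e2, ?_⟩
    have e1s : B *ᵥ yb + Nᵀ *ᵥ xb = -b := by rw [← e2]; abel
    have e2s : M *ᵥ yb + A *ᵥ xb = -a := by rw [← e1]; abel
    exact stmt19_solve_x B A Nᵀ M hAd h2 b a yb xb e1s e2s
  · rintro ⟨hxv, hyv⟩
    subst hxv; subst hyv
    refine ⟨stmt19_eq_a A B M Nᵀ hAd hBd h1 h2 a b, ?_⟩
    have := stmt19_eq_a B A Nᵀ M hBd hAd h2 h1 b a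
    rw [← this]; abel
end
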